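/- Let a ≤ b and let T ∈ ℂ^a ⊗ ℂ^b ⊗ ℂ^b be a concise tensor such that the space T(A*) = {T(α) : α ∈ (ℂ^a)*} ⊆ Hom((ℂ^b)*, ℂ^b) is of bounded rank b−1 (corank one) and primitive. Then T does not have minimal border rank: T does not lie in the closure of the set of tensors of rank at most b in ℂ^a ⊗ ℂ^b ⊗ ℂ^b. -/

import Mathlib

open Matrix

/-- A three-way tensor in `ℂ^a ⊗ ℂ^b ⊗ ℂ^c`, in coordinates. -/
abbrev Tensor3 (a b c : ℕ) := Fin a → Fin b → Fin c → ℂ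

/-- The set of tensors of rank at most `r` in `ℂ^a ⊗ ℂ^b ⊗ ℂ^c`. -/
def rankLE (a b c r : ℕ) : Set (Tensor3 a b c) :=
  {T | ∃ (u : Fin r → Fin a → ℂ) (v : Fin r → Fin b → ℂ) (w : Fin r → Fin c → ℂ),
    T = fun i j k => ∑ s, u s i * v s j * w s k}

/-- The slice `T(α) : B^* → C` of a tensor, as a matrix. -/
noncomputable def tensorSlice {a b c : ℕ} (T : Tensor3 a b c) (α : Fin a → ℂ) :
    Matrix (Fin b) (Fin c) ℂ :=
  Matrix.of fun j k => ∑ i, α i * T i j k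

lemma slice_factor {a b : ℕ} (u : Fin b → Fin a → ℂ) (v w : Fin b → Fin b → ℂ) (α : Fin a → ℂ) :
    tensorSlice (fun i j k => ∑ s, u s i * v s j * w s k) α
      = (Matrix.of fun j s => v s j) * (Matrix.diagonal fun s => ∑ i, α i * u s i)
          * (Matrix.of fun s k => w s k) := by
  ext j k
  simp only [tensorSlice, Matrix.of_apply, Matrix.mul_apply, Matrix.diagonal_apply,
    mul_ite, ite_mul, mul_zero, zero_mul, Finset.sum_ite_eq', Finset.mem_univ, if_true,
    Finset.mul_sum, Finset.sum_mul]
  rw [Finset.sum_comm]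
  apply Finset.sum_congr rfl
  intro s _
  apply Finset.sum_congr rfl
  intro i _
  ring

lemma key_sym {b : ℕ} (V W : Matrix (Fin b) (Fin b) ℂ) (d d' d'' : Fin b → ℂ) :
    (V * diagonal d * W) * adjugate (V * diagonal d' * W) * (V * diagonal d'' * W)
      = (V * diagonal d'' * W) * adjugate (V * diagonal d' * W) * (V * diagonal d * W) := by
  have hadj : adjugate (V * diagonal d' * W)
      = adjugate W * (adjugate (diagonal d') * adjugate V) := by
    rw [adjugate_mul_distrib, adjugate_mul_distrib]
  have hW : ∀ X : Matrix (Fin b) (Fin b) ℂ, W * (adjugate W * X) = W.det • X := by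
    intro X; rw [← Matrix.mul_assoc, mul_adjugate, Matrix.smul_mul, Matrix.one_mul]
  have hV : ∀ X : Matrix (Fin b) (Fin b) ℂ, adjugate V * (V * X) = V.det • X := by
    intro X; rw [← Matrix.mul_assoc, adjugate_mul, Matrix.smul_mul, Matrix.one_mul]
  have hform : ∀ e f : Fin b → ℂ,
      (V * diagonal e * W) * adjugate (V * diagonal d' * W) * (V * diagonal f * W)
        = (W.det * V.det) • (V * (diagonal e * (adjugate (diagonal d') * (diagonal f * W)))) := by
    intro e f
    rw [hadj]
    simp only [Matrix.mul_assoc]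
    rw [hV, hW]
    simp only [Matrix.mul_smul, smul_smul]
  have hmid :
      diagonal d * (adjugate (diagonal d') * (diagonal d'' * W))
        = diagonal d'' * (adjugate (diagonal d') * (diagonal d * W)) := by
    rw [adjugate_diagonal, ← Matrix.mul_assoc, ← Matrix.mul_assoc,
      diagonal_mul_diagonal, diagonal_mul_diagonal, ← Matrix.mul_assoc, ← Matrix.mul_assoc,
      diagonal_mul_diagonal, diagonal_mul_diagonal]
    have h : (fun i => (d i * ∏ j ∈ Finset.univ.erase i, d' j) * d'' i)
        = (fun i => (d'' i * ∏ j ∈ Finset.univ.erase i, d' j) * d i) := by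
      funext i; ring
    rw [h]
  rw [hform, hform, hmid]

lemma ident_rankLE {a b : ℕ} (S : Tensor3 a b b) (hS : S ∈ rankLE a b b b)
    (α α' α'' : Fin a → ℂ) :
    tensorSlice S α * adjugate (tensorSlice S α') * tensorSlice S α''
      = tensorSlice S α'' * adjugate (tensorSlice S α') * tensorSlice S α := by
  obtain ⟨u, v, w, rfl⟩ := hS
  rw [slice_factor, slice_factor, slice_factor]
  exact key_sym _ _ _ _ _

lemma continuous_slice {a b : ℕ} (α : Fin a → ℂ) :
    Continuous (fun S : Tensor3 a b b => tensorSlice S α) := by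
  apply continuous_pi; intro j
  apply continuous_pi; intro k
  simp only [tensorSlice, Matrix.of_apply]
  apply continuous_finset_sum
  intro i _
  have : Continuous fun S : Tensor3 a b b => S i j k :=
    ((continuous_apply k).comp ((continuous_apply j).comp (continuous_apply i)))
  exact continuous_const.mul this

lemma ident_closure {a b : ℕ} (S : Tensor3 a b b) (hS : S ∈ closure (rankLE a b b b))
    (α α' α'' : Fin a → ℂ) :
    tensorSlice S α * adjugate (tensorSlice S α') * tensorSlice S α''
      = tensorSlice S α'' * adjugate (tensorSlice S α') * tensorSlice S α := by
  have hc : Continuous (fun S : Tensor3 a b b =>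
      tensorSlice S α * adjugate (tensorSlice S α') * tensorSlice S α''
        - tensorSlice S α'' * adjugate (tensorSlice S α') * tensorSlice S α) := by
    have h1 := continuous_slice (b := b) α
    have h2 := continuous_slice (b := b) α'
    have h3 := continuous_slice (b := b) α''
    exact (((h1.matrix_mul h2.matrix_adjugate).matrix_mul h3).sub
      ((h3.matrix_mul h2.matrix_adjugate).matrix_mul h1))
  have hsub : closure (rankLE a b b b) ⊆
      (fun S : Tensor3 a b b =>
        tensorSlice S α * adjugate (tensorSlice S α') * tensorSlice S α''
          - tensorSlice S α'' * adjugate (tensorSlice S α') * tensorSlice S α) ⁻¹' {0} := by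
    apply closure_minimal
    · intro S hS
      simp only [Set.mem_preimage, Set.mem_singleton_iff, sub_eq_zero]
      exact ident_rankLE S hS α α' α''
    · exact IsClosed.preimage hc isClosed_singleton
  have := hsub hS
  simpa only [Set.mem_preimage, Set.mem_singleton_iff, sub_eq_zero] using this

lemma det_updateColumn_one {n : ℕ} (i : Fin n) (v : Fin n → ℂ) :
    ((1 : Matrix (Fin n) (Fin n) ℂ).updateCol i v).det = v i := by
  have h := Matrix.cramer_apply (1 : Matrix (Fin n) (Fin n) ℂ) v i
  rw [Matrix.cramer_one] at h
  exact h.symm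

lemma det_updateRow_one {n : ℕ} (i : Fin n) (v : Fin n → ℂ) :
    ((1 : Matrix (Fin n) (Fin n) ℂ).updateRow i v).det = v i := by
  rw [← Matrix.det_transpose, ← Matrix.updateCol_transpose, Matrix.transpose_one,
    det_updateColumn_one]

lemma Dv_zero {n : ℕ} (P X0 Q : Matrix (Fin n) (Fin n) ℂ) (x : Fin n → ℂ) (i0 : Fin n)
    (hPu : IsUnit P) (hQu : IsUnit Q)
    (hker : LinearMap.ker X0.mulVecLin = Submodule.span ℂ {x})
    (hQx : Q *ᵥ Pi.single i0 1 = x)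
    (v : Fin n → ℂ) (hv : (P * (X0 * Q)) *ᵥ v = 0) (hvi0 : v i0 = 0) : v = 0 := by
  have hPinj : Function.Injective P.mulVec := Matrix.mulVec_injective_iff_isUnit.2 hPu
  have hQinj : Function.Injective Q.mulVec := Matrix.mulVec_injective_iff_isUnit.2 hQu
  have h1 : P *ᵥ ((X0 * Q) *ᵥ v) = P *ᵥ 0 := by
    rw [Matrix.mulVec_mulVec, hv, Matrix.mulVec_zero]
  have h2 : X0 *ᵥ (Q *ᵥ v) = 0 := by
    have := hPinj h1
    rwa [← Matrix.mulVec_mulVec] at this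
  have h3 : Q *ᵥ v ∈ LinearMap.ker X0.mulVecLin := by
    simpa [Matrix.mulVecLin_apply] using h2
  rw [hker, Submodule.mem_span_singleton] at h3
  obtain ⟨c, hc⟩ := h3
  have h4 : Q *ᵥ (c • (Pi.single i0 1 : Fin n → ℂ)) = Q *ᵥ v := by
    rw [Matrix.mulVec_smul, hQx, hc]
  have h5 : c • (Pi.single i0 1 : Fin n → ℂ) = v := hQinj h4
  have hc0 : c = 0 := by
    have h6 := congrFun h5 i0
    simp only [Pi.smul_apply, Pi.single_eq_same, smul_eq_mul, mul_one, hvi0] at h6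
    exact h6
  rw [← h5, hc0, zero_smul]

lemma dagger {n : ℕ} (X0 N : Matrix (Fin n) (Fin n) ℂ) (x y : Fin n → ℂ)
    (hker : LinearMap.ker X0.mulVecLin = Submodule.span ℂ {x})
    (hx : x ≠ 0) (hy : y ≠ 0) (hyX : y ᵥ* X0 = 0)
    (hdet : ∀ t : ℂ, (X0 + t • N).det = 0) :
    y ⬝ᵥ (N *ᵥ x) = 0 := by
  obtain ⟨i0, hi0⟩ := Function.ne_iff.1 hx
  obtain ⟨i1, hi1⟩ := Function.ne_iff.1 hy
  simp only [Pi.zero_apply] at hi0 hi1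
  set Q : Matrix (Fin n) (Fin n) ℂ := (1 : Matrix (Fin n) (Fin n) ℂ).updateCol i0 x with hQdef
  set P : Matrix (Fin n) (Fin n) ℂ := (1 : Matrix (Fin n) (Fin n) ℂ).updateRow i1 y with hPdef
  have hQdet : Q.det = x i0 := det_updateColumn_one i0 x
  have hPdet : P.det = y i1 := det_updateRow_one i1 y
  have hQu : IsUnit Q := by
    rw [Matrix.isUnit_iff_isUnit_det, hQdet]; exact (isUnit_iff_ne_zero).2 hi0
  have hPu : IsUnit P := by
    rw [Matrix.isUnit_iff_isUnit_det, hPdet]; exact (isUnit_iff_ne_zero).2 hi1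
  have hQx : Q *ᵥ Pi.single i0 1 = x := by
    rw [Matrix.mulVec_single]
    funext r
    simp [hQdef, Matrix.updateCol_self]
  have hProw : ∀ z : Fin n → ℂ, (P *ᵥ z) i1 = y ⬝ᵥ z := by
    intro z
    simp [Matrix.mulVec, hPdef, Matrix.updateRow_self]
  have hX0x : X0 *ᵥ x = 0 := by
    have : x ∈ LinearMap.ker X0.mulVecLin := by
      rw [hker]; exact Submodule.mem_span_singleton_self x
    simpa [Matrix.mulVecLin_apply] using this
  set w : Fin n → ℂ := P *ᵥ (N *ᵥ x) with hwdef
  -- the matrices M t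
  set M : ℂ → Matrix (Fin n) (Fin n) ℂ := fun t => P * ((X0 + t • N) * Q) with hMdef
  have hMcol : ∀ t : ℂ, ∀ r, M t r i0 = t * w r := by
    intro t r
    have : (M t *ᵥ Pi.single i0 1) = t • w := by
      rw [hMdef]
      rw [← Matrix.mulVec_mulVec, ← Matrix.mulVec_mulVec, hQx]
      rw [Matrix.add_mulVec, hX0x, Matrix.smul_mulVec, zero_add]
      rw [Matrix.mulVec_smul]
    have h2 := congrFun this r
    simpa [Matrix.mulVec_single] using h2
  set f : ℂ → ℂ := fun t => ((M t).updateCol i0 w).det with hfdef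
  have hfzero : ∀ t : ℂ, t ≠ 0 → f t = 0 := by
    intro t ht
    have hself : M t = (M t).updateCol i0 (t • w) := by
      funext r j
      rcases eq_or_ne j i0 with rfl | hj
      · rw [Matrix.updateCol_self]; exact (hMcol t r).trans rfl
      · rw [Matrix.updateCol_ne hj]
    have hdetM : (M t).det = 0 := by
      rw [hMdef]
      simp only [Matrix.det_mul, hdet t, zero_mul, mul_zero]
    have : (M t).det = t * f t := by
      conv_lhs => rw [hself]
      rw [Matrix.det_updateCol_smul]
    rw [hdetM] at this
    exact (mul_eq_zero.1 this.symm).resolve_left ht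
  have hfcont : Continuous f := by
    have hMcont : Continuous M := by
      apply continuous_const.matrix_mul
      apply Continuous.matrix_mul _ continuous_const
      exact continuous_const.add (continuous_id.smul continuous_const)
    exact (hMcont.matrix_updateCol i0 continuous_const).matrix_det
  have hf0 : f 0 = 0 := by
    have hclosed : IsClosed {t : ℂ | f t = 0} := isClosed_eq hfcont continuous_const
    have hsub : closure ({(0:ℂ)}ᶜ : Set ℂ) ⊆ {t : ℂ | f t = 0} :=
      closure_minimal (fun t ht => hfzero t ht) hclosed
    have : (0:ℂ) ∈ closure ({(0:ℂ)}ᶜ : Set ℂ) := by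
      rw [(dense_compl_singleton (0:ℂ)).closure_eq]; trivial
    exact hsub this
  -- f 0 = w i1 * det C₁
  have hM0 : X0 + (0:ℂ) • N = X0 := by simp
  set C : Matrix (Fin n) (Fin n) ℂ := (P * (X0 * Q)).updateCol i0 w with hCdef
  have hfC : f 0 = C.det := by simp only [hfdef, hMdef, hM0, hCdef]
  have hDrow : ∀ j, (P * (X0 * Q)) i1 j = 0 := by
    intro j
    have hyXQ : y ᵥ* (X0 * Q) = 0 := by
      rw [← Matrix.vecMul_vecMul, hyX, Matrix.zero_vecMul]
    have : (P * (X0 * Q)) i1 j = (y ᵥ* (X0 * Q)) j := by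
      simp [Matrix.mul_apply, Matrix.vecMul, dotProduct, hPdef, Matrix.updateRow_self]
    rw [this, hyXQ]; rfl
  have hCrow : C i1 = w i1 • (Pi.single i0 1 : Fin n → ℂ) := by
    funext j
    rcases eq_or_ne j i0 with rfl | hj
    · rw [hCdef, Matrix.updateCol_self]; simp
    · rw [hCdef, Matrix.updateCol_ne hj]
      rw [hDrow j]
      simp [Pi.single_apply, hj]
  set C1 : Matrix (Fin n) (Fin n) ℂ := C.updateRow i1 (Pi.single i0 1) with hC1def
  have hdetC : C.det = w i1 * C1.det := by
    conv_lhs => rw [← Matrix.updateRow_eq_self C i1, hCrow]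
    rw [Matrix.det_updateRow_smul]
  have hC1inj : Function.Injective C1.mulVec := by
    rw [← Matrix.coe_mulVecLin, ← LinearMap.ker_eq_bot]
    rw [Submodule.eq_bot_iff]
    intro v hv
    rw [LinearMap.mem_ker, Matrix.mulVecLin_apply] at hv
    have hvi0 : v i0 = 0 := by
      have := congrFun hv i1
      simp only [Matrix.mulVec, dotProduct, hC1def, Matrix.updateRow_self,
        Pi.zero_apply] at this
      simpa [Pi.single_apply] using this
    have hDv : (P * (X0 * Q)) *ᵥ v = 0 := by
      funext i
      rcases eq_or_ne i i1 with rfl | hi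
      · simp only [Matrix.mulVec, dotProduct, Pi.zero_apply]
        exact Finset.sum_eq_zero fun j _ => by rw [hDrow j, zero_mul]
      · have h1 := congrFun hv i
        simp only [Pi.zero_apply] at h1
        rw [Matrix.mulVec, Pi.zero_apply]
        rw [← h1]
        simp only [Matrix.mulVec, dotProduct]
        apply Finset.sum_congr rfl
        intro j _
        rcases eq_or_ne j i0 with rfl | hj
        · rw [hvi0, mul_zero, mul_zero]
        · rw [hC1def, Matrix.updateRow_ne hi, hCdef, Matrix.updateCol_ne hj]
    have := Dv_zero P X0 Q x i0 hPu hQu hker hQx v hDv hvi0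
    exact this
  have hC1det : C1.det ≠ 0 := by
    intro h
    have : IsUnit C1 := Matrix.mulVec_injective_iff_isUnit.1 hC1inj
    rw [Matrix.isUnit_iff_isUnit_det, h] at this
    simpa using this
  have hwi1 : w i1 = 0 := by
    have : (0:ℂ) = w i1 * C1.det := by rw [← hf0, hfC, hdetC]
    rcases mul_eq_zero.1 this.symm with h | h
    · exact h
    · exact absurd h hC1det
  rw [← hProw (N *ᵥ x)]
  exact hwi1

lemma det_zero_of_rank_lt {n : ℕ} (A : Matrix (Fin n) (Fin n) ℂ) (h : A.rank < n) :
    A.det = 0 := by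
  by_contra hd
  have hu : IsUnit A := (Matrix.isUnit_iff_isUnit_det A).2 (isUnit_iff_ne_zero.2 hd)
  have := Matrix.rank_of_isUnit A hu
  rw [Fintype.card_fin] at this
  omega

lemma finrank_pi_fin (n : ℕ) : Module.finrank ℂ (Fin n → ℂ) = n := by
  simp [Module.finrank_pi]

lemma ker_span_of_rank {n : ℕ} (A : Matrix (Fin n) (Fin n) ℂ) (hn : 1 ≤ n)
    (h : A.rank = n - 1) :
    ∃ x : Fin n → ℂ, x ≠ 0 ∧ LinearMap.ker A.mulVecLin = Submodule.span ℂ {x} := by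
  have hrn := LinearMap.finrank_range_add_finrank_ker A.mulVecLin
  rw [finrank_pi_fin] at hrn
  have hrank : Module.finrank ℂ (LinearMap.range A.mulVecLin) = n - 1 := h
  have hker1 : Module.finrank ℂ (LinearMap.ker A.mulVecLin) = 1 := by omega
  have hne : LinearMap.ker A.mulVecLin ≠ ⊥ := by
    intro hbot
    rw [hbot] at hker1
    simp at hker1
  obtain ⟨x, hxmem, hxne⟩ := Submodule.exists_mem_ne_zero_of_ne_bot hne
  refine ⟨x, hxne, ?_⟩
  have hle : Submodule.span ℂ {x} ≤ LinearMap.ker A.mulVecLin := by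
    rw [Submodule.span_le, Set.singleton_subset_iff]; exact hxmem
  have hsp : Module.finrank ℂ (Submodule.span ℂ {x} : Submodule ℂ (Fin n → ℂ)) = 1 :=
    finrank_span_singleton hxne
  exact (Submodule.eq_of_le_of_finrank_le hle (by rw [hsp, hker1])).symm

lemma adj_structure {n : ℕ} (hn : 1 ≤ n) (X0 : Matrix (Fin n) (Fin n) ℂ)
    (hr : X0.rank = n - 1) (hrlt : X0.rank < n) :
    ∃ (x yy : Fin n → ℂ), x ≠ 0 ∧ yy ≠ 0 ∧
      LinearMap.ker X0.mulVecLin = Submodule.span ℂ {x} ∧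
      yy ᵥ* X0 = 0 ∧
      (∀ i j, X0.adjugate i j = x i * yy j) := by
  have hdet0 : X0.det = 0 := det_zero_of_rank_lt X0 (by omega)
  obtain ⟨x, hxne, hxker⟩ := ker_span_of_rank X0 hn hr
  have hrT : X0ᵀ.rank = n - 1 := by rw [Matrix.rank_transpose]; exact hr
  obtain ⟨y0, hy0ne, hy0ker⟩ := ker_span_of_rank X0ᵀ hn hrT
  have hy0X : y0 ᵥ* X0 = 0 := by
    have : y0 ∈ LinearMap.ker X0ᵀ.mulVecLin := by
      rw [hy0ker]; exact Submodule.mem_span_singleton_self y0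
    rw [LinearMap.mem_ker, Matrix.mulVecLin_apply, Matrix.mulVec_transpose] at this
    exact this
  -- columns of adjugate lie in the kernel
  have hcolker : ∀ j, (fun i => X0.adjugate i j) ∈ LinearMap.ker X0.mulVecLin := by
    intro j
    rw [LinearMap.mem_ker, Matrix.mulVecLin_apply]
    funext i
    have : (X0 * X0.adjugate) i j = (X0.det • (1 : Matrix (Fin n) (Fin n) ℂ)) i j := by
      rw [Matrix.mul_adjugate]
    rw [hdet0] at this
    simp only [zero_smul, Matrix.zero_apply] at this
    simpa [Matrix.mulVec, dotProduct, Matrix.mul_apply] using this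
  have hcol : ∀ j, ∃ c : ℂ, c • x = fun i => X0.adjugate i j := by
    intro j
    have := hcolker j
    rw [hxker, Submodule.mem_span_singleton] at this
    exact this
  choose c hc using hcol
  have hadjc : ∀ i j, X0.adjugate i j = x i * c j := by
    intro i j
    have := congrFun (hc j) i
    simp only [Pi.smul_apply, smul_eq_mul] at this
    rw [← this]; ring
  -- c ᵥ* X0 = 0
  obtain ⟨istar, histar⟩ := Function.ne_iff.1 hxne
  simp only [Pi.zero_apply] at histar
  have hcX : c ᵥ* X0 = 0 := by
    funext j
    have : (X0.adjugate * X0) istar j = 0 := by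
      rw [Matrix.adjugate_mul, hdet0]; simp
    rw [Matrix.mul_apply] at this
    have h2 : ∑ k, x istar * c k * X0 k j = 0 := by
      rw [← this]; apply Finset.sum_congr rfl; intro k _; rw [hadjc istar k]
    have h3 : x istar * ∑ k, c k * X0 k j = 0 := by
      rw [Finset.mul_sum]
      rw [← h2]; apply Finset.sum_congr rfl; intro k _; ring
    have h4 := (mul_eq_zero.1 h3).resolve_left histar
    simpa [Matrix.vecMul, dotProduct] using h4
  -- adjugate is nonzero
  obtain ⟨i0, hi0⟩ := Function.ne_iff.1 hxne
  obtain ⟨i1, hi1⟩ := Function.ne_iff.1 hy0ne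
  simp only [Pi.zero_apply] at hi0 hi1
  set Q : Matrix (Fin n) (Fin n) ℂ := (1 : Matrix (Fin n) (Fin n) ℂ).updateCol i0 x with hQdef
  set P : Matrix (Fin n) (Fin n) ℂ := (1 : Matrix (Fin n) (Fin n) ℂ).updateRow i1 y0 with hPdef
  have hQu : IsUnit Q := by
    rw [Matrix.isUnit_iff_isUnit_det, det_updateColumn_one]
    exact (isUnit_iff_ne_zero).2 hi0
  have hPu : IsUnit P := by
    rw [Matrix.isUnit_iff_isUnit_det, det_updateRow_one]
    exact (isUnit_iff_ne_zero).2 hi1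
  have hQx : Q *ᵥ Pi.single i0 1 = x := by
    rw [Matrix.mulVec_single]
    funext r
    simp [hQdef, Matrix.updateCol_self]
  have hDrow : ∀ j, (P * (X0 * Q)) i1 j = 0 := by
    intro j
    have hyXQ : y0 ᵥ* (X0 * Q) = 0 := by
      rw [← Matrix.vecMul_vecMul, hy0X, Matrix.zero_vecMul]
    have : (P * (X0 * Q)) i1 j = (y0 ᵥ* (X0 * Q)) j := by
      simp [Matrix.mul_apply, Matrix.vecMul, dotProduct, hPdef, Matrix.updateRow_self]
    rw [this, hyXQ]; rfl
  have hadjD : (P * (X0 * Q)).adjugate i0 i1 ≠ 0 := by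
    rw [Matrix.adjugate_apply]
    set C2 : Matrix (Fin n) (Fin n) ℂ :=
      (P * (X0 * Q)).updateRow i1 (Pi.single i0 1) with hC2def
    have hC2inj : Function.Injective C2.mulVec := by
      rw [← Matrix.coe_mulVecLin, ← LinearMap.ker_eq_bot]
      rw [Submodule.eq_bot_iff]
      intro v hv
      rw [LinearMap.mem_ker, Matrix.mulVecLin_apply] at hv
      have hvi0 : v i0 = 0 := by
        have := congrFun hv i1
        simp only [Matrix.mulVec, dotProduct, hC2def, Matrix.updateRow_self,
          Pi.zero_apply] at this
        simpa [Pi.single_apply] using this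
      have hDv : (P * (X0 * Q)) *ᵥ v = 0 := by
        funext i
        rcases eq_or_ne i i1 with rfl | hi
        · simp only [Matrix.mulVec, dotProduct, Pi.zero_apply]
          exact Finset.sum_eq_zero fun j _ => by rw [hDrow j, zero_mul]
        · have h1 := congrFun hv i
          simp only [Pi.zero_apply] at h1
          rw [Matrix.mulVec, Pi.zero_apply]
          rw [← h1]
          simp only [Matrix.mulVec, dotProduct]
          apply Finset.sum_congr rfl
          intro j _
          rw [hC2def, Matrix.updateRow_ne hi]
      exact Dv_zero P X0 Q x i0 hPu hQu hxker hQx v hDv hvi0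
    intro h
    have : IsUnit C2 := Matrix.mulVec_injective_iff_isUnit.1 hC2inj
    rw [Matrix.isUnit_iff_isUnit_det, h] at this
    simpa using this
  have hadjne : X0.adjugate ≠ 0 := by
    intro h0
    have : (P * (X0 * Q)).adjugate = Q.adjugate * X0.adjugate * P.adjugate := by
      rw [Matrix.adjugate_mul_distrib, Matrix.adjugate_mul_distrib]
    rw [h0] at this
    simp only [Matrix.mul_zero, Matrix.zero_mul] at this
    rw [this] at hadjD
    simp at hadjD
  -- c ≠ 0
  have hcne : c ≠ 0 := by
    intro h0
    apply hadjne
    funext i j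
    rw [hadjc i j, h0]
    simp
  exact ⟨x, c, hxne, hcne, hxker, hcX, hadjc⟩

noncomputable def dotFunc {n : ℕ} (v : Fin n → ℂ) : (Fin n → ℂ) →ₗ[ℂ] ℂ where
  toFun w := v ⬝ᵥ w
  map_add' w z := dotProduct_add v w z
  map_smul' c w := by simp [dotProduct_smul]

@[simp] lemma dotFunc_apply {n : ℕ} (v w : Fin n → ℂ) : dotFunc v w = v ⬝ᵥ w := rfl

lemma finrank_ker_dotFunc {n : ℕ} (v : Fin n → ℂ) (hv : v ≠ 0) :
    Module.finrank ℂ (LinearMap.ker (dotFunc v)) = n - 1 := by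
  obtain ⟨j, hj⟩ := Function.ne_iff.1 hv
  simp only [Pi.zero_apply] at hj
  have hrn := LinearMap.finrank_range_add_finrank_ker (dotFunc v)
  rw [finrank_pi_fin] at hrn
  have hr1 : Module.finrank ℂ (LinearMap.range (dotFunc v)) = 1 := by
    have hle : Module.finrank ℂ (LinearMap.range (dotFunc v)) ≤ 1 := by
      have := Submodule.finrank_le (LinearMap.range (dotFunc v))
      simpa using this
    have hne : LinearMap.range (dotFunc v) ≠ ⊥ := by
      intro hbot
      rw [LinearMap.range_eq_bot] at hbot
      have := congrFun (congrArg DFunLike.coe hbot) (Pi.single j 1)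
      simp only [dotFunc_apply, LinearMap.zero_apply] at this
      rw [dotProduct_single] at this
      simp at this
      exact hj this
    have hpos : 0 < Module.finrank ℂ (LinearMap.range (dotFunc v)) := by
      rcases Nat.eq_zero_or_pos (Module.finrank ℂ (LinearMap.range (dotFunc v))) with h | h
      · exact absurd (Submodule.finrank_eq_zero.1 h) hne
      · exact h
    omega
  omega

lemma triple_apply {n : ℕ} (A M B : Matrix (Fin n) (Fin n) ℂ) (x y : Fin n → ℂ)
    (hM : ∀ i j, M i j = x i * y j) (i j : Fin n) :
    (A * M * B) i j = (A *ᵥ x) i * (y ᵥ* B) j := by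
  rw [Matrix.mul_apply]
  simp only [Matrix.mul_apply, Matrix.mulVec, Matrix.vecMul, dotProduct]
  rw [Finset.sum_mul_sum]
  rw [Finset.sum_comm]
  apply Finset.sum_congr rfl
  intro q _
  rw [Finset.sum_mul]
  apply Finset.sum_congr rfl
  intro p _
  rw [hM p q]
  ring

lemma slice_single {a b : ℕ} (T : Tensor3 a b b) (i : Fin a) (j k : Fin b) :
    tensorSlice T (Pi.single i 1) j k = T i j k := by
  simp only [tensorSlice, Matrix.of_apply, Pi.single_apply, ite_mul, one_mul, zero_mul,
    Finset.sum_ite_eq', Finset.mem_univ, if_true]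

lemma slice_linear {a b : ℕ} (T : Tensor3 a b b) (α β : Fin a → ℂ) (t : ℂ) :
    tensorSlice T (α + t • β) = tensorSlice T α + t • tensorSlice T β := by
  ext j k
  simp only [tensorSlice, Matrix.of_apply, Pi.add_apply, Pi.smul_apply, smul_eq_mul,
    Matrix.add_apply, Matrix.smul_apply]
  rw [Finset.mul_sum, ← Finset.sum_add_distrib]
  apply Finset.sum_congr rfl
  intro i _
  ring


/-- Corollary 5.6 of the paper: a concise tensor `T ∈ ℂ^a ⊗ ℂ^b ⊗ ℂ^b` (with
`a ≤ b`) whose space of slices `T(A^*)` is of bounded rank `b−1` (corank one) and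
primitive cannot have minimal border rank: `T` is not in the closure of the set of
tensors of rank at most `b`. -/
theorem stmt12 (a b : ℕ) (hab : a ≤ b)
    (T : Tensor3 a b b)
    (hconciseA : Function.Injective fun (α : Fin a → ℂ) => tensorSlice T α)
    (hconciseB : Function.Injective fun (β : Fin b → ℂ) => fun (i : Fin a) (k : Fin b) => ∑ j, β j * T i j k)
    (hconciseC : Function.Injective fun (γ : Fin b → ℂ) => fun (i : Fin a) (j : Fin b) => ∑ k, γ k * T i j k)
    (hbdd : ∀ α : Fin a → ℂ, (tensorSlice T α).rank ≤ b - 1)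
    (hcorank1 : ∃ α : Fin a → ℂ, (tensorSlice T α).rank = b - 1)
    (hprimB : ¬ ∃ H : Submodule ℂ (Fin b → ℂ), Module.finrank ℂ H = b - 1 ∧
      ∀ α : Fin a → ℂ, Module.finrank ℂ (H.map (tensorSlice T α).mulVecLin) ≤ b - 2)
    (hprimC : ¬ ∃ H' : Submodule ℂ (Fin b → ℂ), Module.finrank ℂ H' = b - 1 ∧
      ∀ α : Fin a → ℂ, Module.finrank ℂ (H'.map ((tensorSlice T α).transpose.mulVecLin)) ≤ b - 2) :
    T ∉ closure (rankLE a b b b) := by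
  intro hT
  -- dispatch tiny b
  rcases Nat.lt_or_ge b 2 with hb | hb
  · interval_cases b
    · exact hprimB ⟨⊥, by simp, fun α => by simp⟩
    · -- b = 1 : all slices are zero, contradicting conciseness in C
      have hT0 : ∀ i j k, T i j k = 0 := by
        intro i j k
        have h0 : (tensorSlice T (Pi.single i 1)).rank = 0 :=
          Nat.le_zero.1 (hbdd (Pi.single i 1))
        have hbot : LinearMap.range (tensorSlice T (Pi.single i 1)).mulVecLin = ⊥ :=
          Submodule.finrank_eq_zero.1 h0
        rw [LinearMap.range_eq_bot] at hbot
        have := congrFun (congrArg DFunLike.coe hbot) (Pi.single k 1)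
        have h2 := congrFun this j
        rw [Matrix.mulVecLin_apply, Matrix.mulVec_single_one] at h2
        simp only [LinearMap.zero_apply, Pi.zero_apply, Matrix.col_apply] at h2
        rw [slice_single] at h2
        exact h2
      have h1 : (fun (γ : Fin 1 → ℂ) => fun (i : Fin a) (j : Fin 1) => ∑ k, γ k * T i j k)
          (fun _ => 1) = (fun (γ : Fin 1 → ℂ) => fun (i : Fin a) (j : Fin 1) => ∑ k, γ k * T i j k) 0 := by
        funext i j
        simp [hT0]
      have := hconciseC h1
      have h2 := congrFun this 0
      simp at h2
  -- now b ≥ 2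
  obtain ⟨α0, hα0⟩ := hcorank1
  obtain ⟨x, y, hxne, hyne, hxker, hyX, hadj⟩ :=
    adj_structure (by omega) (tensorSlice T α0) hα0 (by omega)
  -- all slices in the pencil through the corank-one slice are singular
  have hdetall : ∀ α : Fin a → ℂ, ∀ t : ℂ,
      (tensorSlice T α0 + t • tensorSlice T α).det = 0 := by
    intro α t
    rw [← slice_linear]
    apply det_zero_of_rank_lt
    have := hbdd (α0 + t • α)
    omega
  have hdag : ∀ α : Fin a → ℂ, y ⬝ᵥ (tensorSlice T α *ᵥ x) = 0 := fun α =>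
    dagger (tensorSlice T α0) (tensorSlice T α) x y hxker hxne hyne hyX (hdetall α)
  -- the symmetry identity entrywise
  have hE : ∀ α β : Fin a → ℂ, ∀ i j : Fin b,
      (tensorSlice T α *ᵥ x) i * (y ᵥ* tensorSlice T β) j
        = (tensorSlice T β *ᵥ x) i * (y ᵥ* tensorSlice T α) j := by
    intro α β i j
    have h := ident_closure T hT α α0 β
    have h1 := triple_apply (tensorSlice T α) (tensorSlice T α0).adjugate
      (tensorSlice T β) x y hadj i j
    have h2 := triple_apply (tensorSlice T β) (tensorSlice T α0).adjugate
      (tensorSlice T α) x y hadj i j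
    rw [← h1, ← h2, h]
  -- cfun is not identically zero
  have hcex : ∃ α1, y ᵥ* tensorSlice T α1 ≠ 0 := by
    by_contra hno
    push_neg at hno
    apply hyne
    apply hconciseB
    funext i k
    have := congrFun (hno (Pi.single i 1)) k
    simp only [Matrix.vecMul, dotProduct, Pi.zero_apply] at this
    simp only [Pi.zero_apply, zero_mul, Finset.sum_const_zero]
    rw [← this]
    apply Finset.sum_congr rfl
    intro j _
    rw [slice_single]
  obtain ⟨α1, hc1ne⟩ := hcex
  obtain ⟨j0, hj0⟩ := Function.ne_iff.1 hc1ne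
  simp only [Pi.zero_apply] at hj0
  -- (tensorSlice T α1) *ᵥ x ≠ 0
  have ha1ne : tensorSlice T α1 *ᵥ x ≠ 0 := by
    intro h0
    apply hxne
    apply hconciseC
    funext i j
    simp only [Pi.zero_apply, zero_mul, Finset.sum_const_zero]
    have hz : ∀ β : Fin a → ℂ, tensorSlice T β *ᵥ x = 0 := by
      intro β
      funext i'
      have h3 := hE α1 β i' j0
      rw [congrFun h0 i', Pi.zero_apply, zero_mul] at h3
      rw [Pi.zero_apply]
      exact (mul_eq_zero.1 h3.symm).resolve_right hj0
    have h4 := congrFun (hz (Pi.single i 1)) j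
    simp only [Matrix.mulVec, dotProduct, Pi.zero_apply] at h4
    rw [← h4]
    apply Finset.sum_congr rfl
    intro k _
    rw [slice_single]
    ring
  obtain ⟨istar, histar⟩ := Function.ne_iff.1 ha1ne
  simp only [Pi.zero_apply] at histar
  -- proportionality of the "row covector" of each slice
  have hprop : ∀ α : Fin a → ℂ,
      y ᵥ* tensorSlice T α
        = (((tensorSlice T α *ᵥ x) istar) / ((tensorSlice T α1 *ᵥ x) istar))
            • (y ᵥ* tensorSlice T α1) := by
    intro α
    funext j
    have h := hE α α1 istar j
    simp only [Pi.smul_apply, smul_eq_mul]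
    field_simp
    linear_combination -h
  -- the hyperplane H
  apply hprimB
  refine ⟨LinearMap.ker (dotFunc (y ᵥ* tensorSlice T α1)),
    finrank_ker_dotFunc _ hc1ne, ?_⟩
  intro α
  set H : Submodule ℂ (Fin b → ℂ) := LinearMap.ker (dotFunc (y ᵥ* tensorSlice T α1))
    with hHdef
  set X : (Fin b → ℂ) →ₗ[ℂ] (Fin b → ℂ) := (tensorSlice T α).mulVecLin with hXdef
  have hmaprange : H.map X ≤ LinearMap.range X := LinearMap.map_le_range
  have hXY : H.map X ≤ LinearMap.ker (dotFunc y) := by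
    intro γ hγ
    obtain ⟨β, hβ, rfl⟩ := hγ
    rw [LinearMap.mem_ker, dotFunc_apply, hXdef, Matrix.mulVecLin_apply,
      Matrix.dotProduct_mulVec]
    have hβ' : (y ᵥ* tensorSlice T α1) ⬝ᵥ β = 0 := hβ
    rw [hprop α, smul_dotProduct, hβ', smul_zero]
  have hrle := hbdd α
  have hrdef : (tensorSlice T α).rank = Module.finrank ℂ (LinearMap.range X) := rfl
  rcases Nat.lt_or_ge ((tensorSlice T α).rank) (b - 1) with hcase | hcase
  · -- rank ≤ b - 2
    have := Submodule.finrank_mono hmaprange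
    omega
  · -- rank = b - 1
    have hreq : (tensorSlice T α).rank = b - 1 := le_antisymm hrle hcase
    by_cases hry : LinearMap.range X ≤ LinearMap.ker (dotFunc y)
    · -- then the covector of α vanishes and x ∈ ker X ∩ H
      have hcα : y ᵥ* tensorSlice T α = 0 := by
        funext k
        have hmem : X (Pi.single k 1) ∈ LinearMap.ker (dotFunc y) :=
          hry ⟨Pi.single k 1, rfl⟩
        rw [LinearMap.mem_ker, dotFunc_apply, hXdef, Matrix.mulVecLin_apply,
          Matrix.mulVec_single_one] at hmem
        rw [Pi.zero_apply, ← hmem]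
        rfl
      have haα : tensorSlice T α *ᵥ x = 0 := by
        funext i
        have h3 := hE α1 α i j0
        rw [congrFun hcα j0, Pi.zero_apply, mul_zero] at h3
        rw [Pi.zero_apply]
        exact (mul_eq_zero.1 h3.symm).resolve_right hj0
      have hxH : x ∈ H := by
        rw [hHdef, LinearMap.mem_ker, dotFunc_apply, ← Matrix.dotProduct_mulVec]
        exact hdag α1
      have hxkerX : X x = 0 := by
        rw [hXdef, Matrix.mulVecLin_apply]; exact haα
      have hmapeq : H.map X = LinearMap.range (X.domRestrict H) :=
        (LinearMap.range_domRestrict H X).symm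
      have hrn := LinearMap.finrank_range_add_finrank_ker (X.domRestrict H)
      have hH : Module.finrank ℂ H = b - 1 := finrank_ker_dotFunc _ hc1ne
      rw [hH] at hrn
      have hker1 : 0 < Module.finrank ℂ (LinearMap.ker (X.domRestrict H)) := by
        rcases Nat.eq_zero_or_pos (Module.finrank ℂ (LinearMap.ker (X.domRestrict H)))
          with h | h
        · exfalso
          have hbot := Submodule.finrank_eq_zero.1 h
          have hmem : (⟨x, hxH⟩ : H) ∈ LinearMap.ker (X.domRestrict H) := by
            rw [LinearMap.mem_ker, LinearMap.domRestrict_apply]; exact hxkerX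
          rw [hbot, Submodule.mem_bot] at hmem
          exact hxne (congrArg Subtype.val hmem)
        · exact h
      rw [hmapeq]
      omega
    · -- range not inside ker y
      have hlt : LinearMap.range X ⊓ LinearMap.ker (dotFunc y) < LinearMap.range X := by
        rcases lt_or_eq_of_le (inf_le_left :
          LinearMap.range X ⊓ LinearMap.ker (dotFunc y) ≤ LinearMap.range X) with h | h
        · exact h
        · exact absurd (inf_eq_left.1 h) hry
      have h1 : Module.finrank ℂ (LinearMap.range X ⊓ LinearMap.ker (dotFunc y) :
          Submodule ℂ (Fin b → ℂ)) < Module.finrank ℂ (LinearMap.range X) :=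
        Submodule.finrank_lt_finrank_of_lt hlt
      have h2 := Submodule.finrank_mono (le_inf hmaprange hXY)
      omega
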